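/- Let n ≥ 1, λ > 0, ω ∈ ℝ^n, T, ρ, σ > 0 and M > 0. Let (c_k)_{k∈ℤ^n} ⊂ ℂ be such that the series F(s,φ) = Σ_{k∈ℤ^n} c_k e^{i⟨k, φ − (ω/λ)s⟩} converges absolutely and uniformly on Π_{T,ρ} × T^n_σ, and suppose |F(s,φ)| ≤ M there. Then for every k ∈ ℤ^n one has |c_k| ≤ M exp(−|⟨k,ω⟩| ρ/λ − |k| σ), where |k| = Σ_i |k_i|. -/

import Mathlib

open Complex MeasureTheory Filter
open scoped BigOperators Topology

noncomputable section

/-- The complex strip `T^n_σ = {z ∈ ℂ^n : |Im z_j| ≤ σ}`. -/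
def TStrip (n : ℕ) (σ : ℝ) : Set (Fin n → ℂ) := {z | ∀ j, |(z j).im| ≤ σ}

/-- The closed rectangle `Π_{T,ρ} = {s ∈ ℂ : |Re s| ≤ T, |Im s| ≤ ρ}`. -/
def Rect (T ρ : ℝ) : Set ℂ := {s | |s.re| ≤ T ∧ |s.im| ≤ ρ}

/-- The general term of the quasi-periodic series
`F(s,φ) = Σ_k c_k e^{i⟨k, φ − (ω/λ)s⟩}`. -/
def qpTerm (n : ℕ) (lam : ℝ) (ω : Fin n → ℝ) (c : (Fin n → ℤ) → ℂ)
    (k : Fin n → ℤ) (p : ℂ × (Fin n → ℂ)) : ℂ :=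
  c k * Complex.exp (Complex.I * ∑ j, (k j : ℂ) * (p.2 j - ((ω j : ℂ) / (lam : ℂ)) * p.1))

lemma int1 (m : ℤ) : ∫ t in Set.Icc (0:ℝ) (2*Real.pi), Complex.exp ((m:ℂ) * Complex.I * t)
    = if m = 0 then ((2*Real.pi : ℝ):ℂ) else 0 := by
  rw [MeasureTheory.integral_Icc_eq_integral_Ioc,
    ← intervalIntegral.integral_of_le (by positivity : (0:ℝ) ≤ 2*Real.pi)]
  by_cases hm : m = 0
  · simp [hm]
  · rw [if_neg hm]
    have hc : (m:ℂ) * Complex.I ≠ 0 :=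
      mul_ne_zero (Int.cast_ne_zero.mpr hm) Complex.I_ne_zero
    rw [integral_exp_mul_complex hc]
    have h1 : (m:ℂ) * Complex.I * ((2*Real.pi : ℝ):ℂ) = (m:ℤ) * (2 * (Real.pi:ℂ) * Complex.I) := by
      push_cast; ring
    have h2 : (m:ℂ) * Complex.I * ((0 : ℝ):ℂ) = 0 := by push_cast; ring
    rw [h1, h2, Complex.exp_int_mul_two_pi_mul_I, Complex.exp_zero, sub_self, zero_div]

/-- The Fourier-coefficient estimate (4.14)–(4.15): if the quasi-periodic series
`F(s,φ) = Σ_k c_k e^{i⟨k, φ − (ω/λ)s⟩}` converges absolutely and uniformly on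
`Π_{T,ρ} × T^n_σ` and is bounded by `M` there, then
`|c_k| ≤ M exp(−|⟨k,ω⟩|ρ/λ − |k|σ)`. -/
theorem quasiperiodic_coeff_bound (n : ℕ) (hn : 1 ≤ n)
    (lam : ℝ) (hlam : 0 < lam) (ω : Fin n → ℝ)
    (T ρ σ M : ℝ) (hT : 0 < T) (hρ : 0 < ρ) (hσ : 0 < σ) (hM : 0 < M)
    (c : (Fin n → ℤ) → ℂ)
    (habs : ∀ p ∈ Rect T ρ ×ˢ TStrip n σ,
      Summable (fun k : Fin n → ℤ => ‖qpTerm n lam ω c k p‖))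
    (hunif : TendstoUniformlyOn
      (fun (F : Finset (Fin n → ℤ)) (p : ℂ × (Fin n → ℂ)) => ∑ k ∈ F, qpTerm n lam ω c k p)
      (fun p => ∑' k : Fin n → ℤ, qpTerm n lam ω c k p)
      atTop (Rect T ρ ×ˢ TStrip n σ))
    (hbd : ∀ p ∈ Rect T ρ ×ˢ TStrip n σ,
      ‖∑' k : Fin n → ℤ, qpTerm n lam ω c k p‖ ≤ M) :
    ∀ k : Fin n → ℤ,
      ‖c k‖ ≤ M * Real.exp (-(|∑ j, (k j : ℝ) * ω j| * ρ / lam) - (∑ j, |(k j : ℝ)|) * σ) := by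
  intro k0
  have hπ : (0:ℝ) < Real.pi := Real.pi_pos
  set e : ℝ := ∑ j, (k0 j : ℝ) * ω j with he_def
  set s0 : ℝ := if 0 ≤ e then ρ else -ρ with hs0_def
  set η : Fin n → ℝ := fun j => if 0 ≤ (k0 j : ℝ) then -σ else σ with hη_def
  set p : (Fin n → ℝ) → ℂ × (Fin n → ℂ) :=
    fun x => ((s0:ℂ) * Complex.I, fun j => ((x j : ℝ):ℂ) + (η j : ℂ) * Complex.I) with hp_def
  set A : (Fin n → ℤ) → ℝ :=
    fun k => -(∑ j, (k j:ℝ) * η j) + (∑ j, (k j:ℝ) * ω j) * s0 / lam with hA_def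
  set b : (Fin n → ℤ) → ℂ := fun k => c k * Complex.exp ((A k : ℝ):ℂ) with hb_def
  set w : (Fin n → ℝ) → ℂ :=
    fun x => Complex.exp (-(Complex.I * ∑ j, (k0 j : ℂ) * (x j : ℂ))) with hw_def
  set S : Set (Fin n → ℝ) := Set.univ.pi (fun _ => Set.Icc 0 (2*Real.pi)) with hS_def
  have hs0 : |s0| = ρ := by
    rw [hs0_def]; split_ifs <;> simp [abs_of_pos hρ]
  have hηabs : ∀ j, |η j| = σ := by
    intro j; simp only [hη_def]; split_ifs <;> simp [abs_of_pos hσ]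
  have hSmeas : MeasurableSet S := MeasurableSet.univ_pi fun _ => measurableSet_Icc
  have hSvol : volume S = ENNReal.ofReal (2*Real.pi) ^ n := by
    rw [hS_def, volume_pi_pi]
    simp [Real.volume_Icc]
  have hSfin : volume S < ⊤ := by
    rw [hSvol]; exact ENNReal.pow_lt_top ENNReal.ofReal_lt_top
  haveI : IsFiniteMeasure (volume.restrict S) :=
    ⟨by rwa [Measure.restrict_apply_univ]⟩
  -- membership
  have hmem : ∀ x : Fin n → ℝ, p x ∈ Rect T ρ ×ˢ TStrip n σ := by
    intro x
    refine ⟨⟨?_, ?_⟩, fun j => ?_⟩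
    · simpa [hp_def] using hT.le
    · simpa [hp_def] using hs0.le
    · simpa [hp_def] using (hηabs j).le
  -- the key exponent identity
  have key : ∀ (k : Fin n → ℤ) (x : Fin n → ℝ),
      Complex.I * (∑ j, (k j : ℂ) * ((((x j : ℝ):ℂ) + (η j : ℂ) * Complex.I)
          - ((ω j : ℂ)/(lam : ℂ)) * ((s0:ℂ) * Complex.I)))
        + -(Complex.I * ∑ j, (k0 j : ℂ) * (x j : ℂ))
      = ((A k : ℝ):ℂ) + ∑ j, ((k j - k0 j : ℤ):ℂ) * Complex.I * (x j : ℂ) := by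
    intro k x
    have hA : ((A k : ℝ):ℂ)
        = ∑ j, (-((k j:ℂ) * (η j:ℂ)) + (k j:ℂ) * (ω j:ℂ) * (s0:ℂ) / (lam:ℂ)) := by
      rw [hA_def]
      push_cast
      rw [Finset.sum_add_distrib, Finset.sum_neg_distrib, ← Finset.sum_div, ← Finset.sum_mul]
    rw [hA, Finset.mul_sum, Finset.mul_sum, ← Finset.sum_neg_distrib,
      ← Finset.sum_add_distrib, ← Finset.sum_add_distrib]
    refine Finset.sum_congr rfl fun j _ => ?_
    push_cast
    linear_combination ((k j:ℂ) * (η j:ℂ) - (k j:ℂ) * (ω j:ℂ) * (s0:ℂ) / (lam:ℂ)) * Complex.I_sq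
  -- the product formula
  have hform : ∀ (k : Fin n → ℤ) (x : Fin n → ℝ),
      qpTerm n lam ω c k (p x) * w x
        = b k * ∏ j, Complex.exp (((k j - k0 j : ℤ):ℂ) * Complex.I * (x j : ℂ)) := by
    intro k x
    rw [qpTerm, hw_def, hb_def, mul_assoc, ← Complex.exp_add, ← Complex.exp_sum,
      mul_assoc, ← Complex.exp_add]
    congr 2
    exact key k x
  -- norms
  have hwn : ∀ x : Fin n → ℝ, ‖w x‖ = 1 := by
    intro x
    have hz : (∑ j, (k0 j:ℂ) * (x j:ℂ)) = ((∑ j, (k0 j:ℝ) * x j : ℝ) : ℂ) := by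
      push_cast; rfl
    have h3 : -(Complex.I * ((∑ j, (k0 j:ℝ) * x j : ℝ):ℂ))
        = ((-(∑ j, (k0 j:ℝ) * x j) : ℝ):ℂ) * Complex.I := by push_cast; ring
    rw [hw_def]
    dsimp only
    rw [hz, h3]
    exact Complex.norm_exp_ofReal_mul_I _
  have hprodn : ∀ (k : Fin n → ℤ) (x : Fin n → ℝ),
      ‖∏ j, Complex.exp (((k j - k0 j : ℤ):ℂ) * Complex.I * (x j : ℂ))‖ = 1 := by
    intro k x
    rw [norm_prod]
    refine Finset.prod_eq_one fun j _ => ?_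
    have : ((k j - k0 j : ℤ):ℂ) * Complex.I * (x j : ℂ)
        = (((k j - k0 j : ℤ) * x j : ℝ):ℂ) * Complex.I := by push_cast; ring
    rw [this]
    exact Complex.norm_exp_ofReal_mul_I _
  have hbn : ∀ k, ‖b k‖ = ‖c k‖ * Real.exp (A k) := by
    intro k
    rw [hb_def, norm_mul]
    congr 1
    exact Complex.norm_exp_ofReal _
  have hhn : ∀ (k : Fin n → ℤ) (x : Fin n → ℝ),
      ‖qpTerm n lam ω c k (p x) * w x‖ = ‖b k‖ := by
    intro k x
    rw [hform k x, norm_mul, hprodn k x, mul_one]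
  have hqn : ∀ (k : Fin n → ℤ) (x : Fin n → ℝ),
      ‖qpTerm n lam ω c k (p x)‖ = ‖b k‖ := by
    intro k x
    have := hhn k x
    rwa [norm_mul, hwn x, mul_one] at this
  -- summability
  have hsumb : Summable (fun k => ‖b k‖) :=
    (habs (p (fun _ => 0)) (hmem _)).congr fun k => hqn k _
  set C : ℝ := ∑' k : Fin n → ℤ, ‖b k‖ with hC_def
  -- continuity
  have hcont : ∀ k : Fin n → ℤ, Continuous (fun x : Fin n → ℝ =>
      qpTerm n lam ω c k (p x) * w x) := by
    intro k
    have h1 : Continuous (fun x : Fin n → ℝ =>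
        b k * ∏ j, Complex.exp (((k j - k0 j : ℤ):ℂ) * Complex.I * (x j : ℂ))) := by
      refine continuous_const.mul (continuous_finset_prod _ fun j _ => ?_)
      exact Complex.continuous_exp.comp
        (continuous_const.mul (Complex.continuous_ofReal.comp (continuous_apply j)))
    have h2 : (fun x : Fin n → ℝ => qpTerm n lam ω c k (p x) * w x)
        = fun x => b k * ∏ j, Complex.exp (((k j - k0 j : ℤ):ℂ) * Complex.I * (x j : ℂ)) :=
      funext fun x => hform k x
    rw [h2]; exact h1
  -- pointwise convergence
  set G : (Fin n → ℝ) → ℂ := fun x => (∑' k : Fin n → ℤ, qpTerm n lam ω c k (p x)) * w x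
    with hG_def
  have hlim : ∀ x : Fin n → ℝ, Tendsto
      (fun F : Finset (Fin n → ℤ) => ∑ k ∈ F, qpTerm n lam ω c k (p x) * w x)
      atTop (𝓝 (G x)) := by
    intro x
    have hs : Summable (fun k => qpTerm n lam ω c k (p x)) :=
      Summable.of_norm (habs (p x) (hmem x))
    exact hs.hasSum.mul_right (w x)
  -- dominated convergence
  have hdct : Tendsto
      (fun F : Finset (Fin n → ℤ) => ∫ x in S, ∑ k ∈ F, qpTerm n lam ω c k (p x) * w x)
      atTop (𝓝 (∫ x in S, G x)) := by
    refine MeasureTheory.tendsto_integral_filter_of_dominated_convergence (fun _ => C)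
      (Eventually.of_forall fun F => ?_) (Eventually.of_forall fun F => ?_)
      (integrable_const C) (Eventually.of_forall fun x => hlim x)
    · exact (continuous_finset_sum _ fun k _ => hcont k).aestronglyMeasurable
    · refine Eventually.of_forall fun x => ?_
      calc ‖∑ k ∈ F, qpTerm n lam ω c k (p x) * w x‖
          ≤ ∑ k ∈ F, ‖qpTerm n lam ω c k (p x) * w x‖ := norm_sum_le _ _
        _ = ∑ k ∈ F, ‖b k‖ := Finset.sum_congr rfl fun k _ => hhn k x
        _ ≤ C := Summable.sum_le_tsum F (fun k _ => norm_nonneg _) hsumb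
  -- value of each term's integral
  have hval : ∀ k : Fin n → ℤ, ∫ x in S, qpTerm n lam ω c k (p x) * w x
      = b k * ∏ j, (if k j - k0 j = 0 then ((2*Real.pi : ℝ):ℂ) else 0) := by
    intro k
    have h2 : ∫ x in S, qpTerm n lam ω c k (p x) * w x
        = ∫ x in S, b k * ∏ j, Complex.exp (((k j - k0 j : ℤ):ℂ) * Complex.I * (x j : ℂ)) := by
      exact integral_congr_ae (Eventually.of_forall fun x => hform k x)
    rw [h2, MeasureTheory.integral_const_mul]
    congr 1
    have hind : ∀ x : Fin n → ℝ,
        Set.indicator S (fun y => ∏ j, Complex.exp (((k j - k0 j : ℤ):ℂ) * Complex.I * (y j : ℂ))) x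
        = ∏ j, Set.indicator (Set.Icc (0:ℝ) (2*Real.pi))
            (fun t => Complex.exp (((k j - k0 j : ℤ):ℂ) * Complex.I * (t:ℂ))) (x j) := by
      intro x
      by_cases hx : x ∈ S
      · rw [Set.indicator_of_mem hx]
        exact (Finset.prod_congr rfl fun j _ =>
          (Set.indicator_of_mem (hx j (Set.mem_univ j))
            (fun t : ℝ => Complex.exp (((k j - k0 j : ℤ):ℂ) * Complex.I * (t:ℂ)))).symm)
      · rw [Set.indicator_of_notMem hx]
        rw [hS_def] at hx
        simp only [Set.mem_pi, Set.mem_univ, forall_true_left, not_forall] at hx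
        obtain ⟨j, hj⟩ := hx
        refine (Finset.prod_eq_zero (Finset.mem_univ j) ?_).symm
        rw [Set.indicator_of_notMem (by simpa using hj)]
    rw [← MeasureTheory.integral_indicator hSmeas]
    simp only [hind]
    rw [MeasureTheory.volume_pi, MeasureTheory.integral_fintype_prod_eq_prod
      (fun j t => Set.indicator (Set.Icc (0:ℝ) (2*Real.pi))
        (fun t => Complex.exp (((k j - k0 j : ℤ):ℂ) * Complex.I * (t:ℂ))) t)]
    refine Finset.prod_congr rfl fun j _ => ?_
    rw [MeasureTheory.integral_indicator measurableSet_Icc]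
    exact int1 (k j - k0 j)
  -- the eventually-constant value
  have hVal2 : ∀ F : Finset (Fin n → ℤ), k0 ∈ F →
      ∑ k ∈ F, ∫ x in S, qpTerm n lam ω c k (p x) * w x
        = b k0 * ((2*Real.pi : ℝ):ℂ) ^ n := by
    intro F hk0F
    rw [Finset.sum_eq_single_of_mem k0 hk0F]
    · rw [hval k0]
      congr 1
      simp [Finset.prod_const]
    · intro k hk hne
      rw [hval k]
      obtain ⟨j, hj⟩ := Function.ne_iff.mp hne
      have hz0 : (if k j - k0 j = 0 then ((2*Real.pi : ℝ):ℂ) else 0) = 0 :=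
        if_neg (sub_ne_zero.mpr hj)
      rw [Finset.prod_eq_zero (Finset.mem_univ j) hz0, mul_zero]
  have hev : ∀ᶠ F : Finset (Fin n → ℤ) in atTop,
      (∫ x in S, ∑ k ∈ F, qpTerm n lam ω c k (p x) * w x)
        = b k0 * ((2*Real.pi : ℝ):ℂ) ^ n := by
    filter_upwards [Filter.eventually_ge_atTop ({k0} : Finset (Fin n → ℤ))] with F hF
    have hk0F : k0 ∈ F := Finset.singleton_subset_iff.mp hF
    rw [MeasureTheory.integral_finset_sum F (fun k _ =>
      ((hcont k).continuousOn.integrableOn_compact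
        (isCompact_univ_pi fun _ => isCompact_Icc)))]
    exact hVal2 F hk0F
  have htc : Tendsto
      (fun F : Finset (Fin n → ℤ) => ∫ x in S, ∑ k ∈ F, qpTerm n lam ω c k (p x) * w x)
      atTop (𝓝 (b k0 * ((2*Real.pi : ℝ):ℂ) ^ n)) :=
    Tendsto.congr' (EventuallyEq.symm hev) tendsto_const_nhds
  have huniq : b k0 * ((2*Real.pi : ℝ):ℂ) ^ n = ∫ x in S, G x :=
    tendsto_nhds_unique htc hdct
  -- bound the integral
  have hGbd : ∀ᵐ x ∂(volume.restrict S), ‖G x‖ ≤ M := by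
    refine Eventually.of_forall fun x => ?_
    rw [hG_def, norm_mul, hwn x, mul_one]
    exact hbd (p x) (hmem x)
  have hbound : ‖∫ x in S, G x‖ ≤ M * (2*Real.pi) ^ n := by
    have h := MeasureTheory.norm_setIntegral_le_of_norm_le_const_ae hSfin hGbd
    have hvol : (volume S).toReal = (2*Real.pi) ^ n := by
      rw [hSvol, ENNReal.toReal_pow, ENNReal.toReal_ofReal (by positivity)]
    rwa [measureReal_def, hvol] at h
  have hbk0 : ‖b k0‖ ≤ M := by
    have h1 : ‖b k0 * ((2*Real.pi : ℝ):ℂ) ^ n‖ = ‖b k0‖ * (2*Real.pi) ^ n := by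
      rw [norm_mul, norm_pow, Complex.norm_real, Real.norm_eq_abs, abs_of_pos (by positivity)]
    have h2 : ‖b k0‖ * (2*Real.pi) ^ n ≤ M * (2*Real.pi) ^ n := by
      rw [← h1, huniq]; exact hbound
    exact le_of_mul_le_mul_right h2 (by positivity)
  -- compute A k0
  have hA0 : A k0 = |e| * ρ / lam + (∑ j, |(k0 j : ℝ)|) * σ := by
    have h1 : ∑ j, (k0 j:ℝ) * η j = -((∑ j, |(k0 j:ℝ)|) * σ) := by
      rw [Finset.sum_mul, ← Finset.sum_neg_distrib]
      refine Finset.sum_congr rfl fun j _ => ?_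
      rw [hη_def]
      dsimp only
      split_ifs with hj
      · rw [_root_.abs_of_nonneg hj]; ring
      · rw [_root_.abs_of_neg (lt_of_not_ge hj)]; ring
    have h2 : e * s0 = |e| * ρ := by
      rw [hs0_def]
      split_ifs with he
      · rw [_root_.abs_of_nonneg he]
      · rw [_root_.abs_of_neg (lt_of_not_ge he)]; ring
    rw [hA_def]
    dsimp only
    rw [h1, ← he_def, h2]
    ring
  rw [hbn k0, hA0] at hbk0
  have hgoal : -(|e| * ρ / lam) - (∑ j, |(k0 j : ℝ)|) * σ
      = -(|e| * ρ / lam + (∑ j, |(k0 j : ℝ)|) * σ) := by ring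
  rw [hgoal, Real.exp_neg]
  rw [mul_comm M _, ← div_eq_inv_mul]
  rw [le_div_iff₀ (Real.exp_pos _)]
  exact hbk0
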